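/- There do not exist a function f : ℝ → ℂ and constants C > 0, γ > 0 satisfying all of the following: (1) the function g(k) = f(k)/(1 − ik) is integrable on ℝ; (2) ∫_ℝ g(k) e^{−ikx} dk = e^{−x} for all real x ≥ 0; and (3) |f(k)| ≤ C e^{−γ|k|} for all real k. (Condition (2) is the scalar instance, with N = 1 and A(t) ≡ 1, of the LCHS formula, so this implies the nonexistence of an exponentially decaying, integrable LCHS kernel.) -/

import Mathlib

open MeasureTheory Complex

theorem integrable_exp_neg_mul_abs' {c : ℝ} (hc : 0 < c) :
    Integrable (fun x : ℝ => Real.exp (-c * |x|)) := by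
  have h1 : IntegrableOn (fun x : ℝ => Real.exp (-c * |x|)) (Set.Ioi 0) := by
    apply (exp_neg_integrableOn_Ioi 0 hc).congr_fun ?_ measurableSet_Ioi
    intro x hx
    simp [abs_of_pos (Set.mem_Ioi.mp hx)]
  have h2 : IntegrableOn (fun x : ℝ => Real.exp (-c * |x|)) (Set.Iio 0) := by
    have hemb : MeasurableEmbedding (Neg.neg : ℝ → ℝ) := measurableEmbedding_neg
    have hpre : (Neg.neg : ℝ → ℝ) ⁻¹' (Set.Iio 0) = Set.Ioi 0 := by ext x; simp
    rw [IntegrableOn, ← Measure.map_neg_eq_self (volume : Measure ℝ),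
      hemb.restrict_map, hpre, hemb.integrable_map_iff]
    exact h1.congr_fun (fun x _ => by simp [Function.comp, abs_neg]) measurableSet_Ioi
  have h3 : IntegrableOn (fun x : ℝ => Real.exp (-c * |x|)) (Set.Iio 0 ∪ Set.Ioi 0) :=
    h2.union h1
  rw [← integrableOn_univ]
  apply h3.congr_set_ae
  rw [Set.Iio_union_Ioi]
  exact (MeasureTheory.ae_eq_univ.mpr (by rw [compl_compl]; simp)).symm

set_option maxHeartbeats 1000000 in
/-- **No exponentially decaying integrable LCHS kernel (Proposition `constraint`).**
There is no function `f : ℝ → ℂ` with constants `C, γ > 0` such that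
`g k = f k / (1 - i k)` is integrable, the scalar LCHS identity
`∫ g k e^{-i k x} dk = e^{-x}` holds for all `x ≥ 0`, and `|f k| ≤ C e^{-γ |k|}`
for all real `k`. -/
theorem no_exponentially_decaying_integrable_kernel :
    ¬ ∃ (f : ℝ → ℂ) (C γ : ℝ), 0 < C ∧ 0 < γ ∧
      Integrable (fun k : ℝ => f k / (1 - Complex.I * k)) ∧
      (∀ x : ℝ, 0 ≤ x →
        (∫ k : ℝ, (f k / (1 - Complex.I * k)) * Complex.exp (-(Complex.I * k * x))) =
          Complex.exp (-x)) ∧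
      (∀ k : ℝ, ‖f k‖ ≤ C * Real.exp (-γ * |k|)) := by
  rintro ⟨f, C, γ, hC, hγ, hInt, hFor, hBound⟩
  set g : ℝ → ℂ := fun k => f k / (1 - Complex.I * k) with hg_def
  -- the norm of the denominator is at least 1
  have hden : ∀ k : ℝ, (1:ℝ) ≤ ‖(1 : ℂ) - Complex.I * k‖ := by
    intro k
    rw [Complex.norm_def]
    refine Real.one_le_sqrt.mpr ?_
    have : Complex.normSq (1 - Complex.I * k) = 1 + k * k := by
      simp [Complex.normSq_apply]
    rw [this]; nlinarith [mul_self_nonneg k]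
  have hg_bound : ∀ k : ℝ, ‖g k‖ ≤ C * Real.exp (-γ * |k|) := by
    intro k
    rw [hg_def]
    simp only [norm_div]
    calc ‖f k‖ / ‖(1 : ℂ) - Complex.I * k‖ ≤ ‖f k‖ :=
          div_le_self (norm_nonneg _) (hden k)
      _ ≤ C * Real.exp (-γ * |k|) := hBound k
  -- norm of the exponential factor
  have hexp_norm : ∀ (k : ℝ) (z : ℂ),
      ‖Complex.exp (-(Complex.I * k * z))‖ = Real.exp (k * z.im) := by
    intro k z
    rw [Complex.norm_exp]
    congr 1
    simp [Complex.mul_re, Complex.mul_im]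
  -- the analytic extension
  set F : ℂ → ℂ := fun z => ∫ k : ℝ, g k * Complex.exp (-(Complex.I * k * z)) with hF_def
  set S : Set ℂ := {z : ℂ | |z.im| < γ} with hS_def
  have hS_open : IsOpen S := by
    have : Continuous fun z : ℂ => |z.im| := continuous_abs.comp Complex.continuous_im
    exact isOpen_lt this continuous_const
  -- F is complex-differentiable on the strip S
  have hF_deriv : ∀ z₀ ∈ S, DifferentiableAt ℂ F z₀ := by
    intro z₀ hz₀
    set δ : ℝ := (γ - |z₀.im|) / 2 with hδ_def
    have hδ : 0 < δ := by
      have := hz₀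
      simp only [hS_def, Set.mem_setOf_eq] at this
      linarith
    have key := hasDerivAt_integral_of_dominated_loc_of_deriv_le
      (F := fun (z : ℂ) (k : ℝ) => g k * Complex.exp (-(Complex.I * k * z)))
      (F' := fun (z : ℂ) (k : ℝ) =>
        g k * (Complex.exp (-(Complex.I * k * z)) * (-(Complex.I * k))))
      (μ := volume) (x₀ := z₀)
      (bound := fun k : ℝ => C * (2 / δ) * Real.exp (-(δ/2) * |k|))
      (s := Metric.ball z₀ δ) (Metric.ball_mem_nhds z₀ hδ) ?_ ?_ ?_ ?_ ?_ ?_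
    · exact key.2.differentiableAt
    · -- a.e. strong measurability for z near z₀
      filter_upwards with z
      exact hInt.aestronglyMeasurable.mul
        ((Complex.continuous_exp.comp (((continuous_const.mul Complex.continuous_ofReal).mul continuous_const).neg)).aestronglyMeasurable)
    · -- integrability at z₀
      apply Integrable.mono' ((integrable_exp_neg_mul_abs' hδ).const_mul C)
      · exact hInt.aestronglyMeasurable.mul
          ((Complex.continuous_exp.comp (((continuous_const.mul Complex.continuous_ofReal).mul continuous_const).neg)).aestronglyMeasurable)
      · filter_upwards with k
        rw [norm_mul, hexp_norm]
        calc ‖g k‖ * Real.exp (k * z₀.im)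
            ≤ (C * Real.exp (-γ * |k|)) * Real.exp (|k| * |z₀.im|) := by
              apply mul_le_mul (hg_bound k) ?_ (Real.exp_nonneg _)
                (by positivity)
              apply Real.exp_le_exp.mpr
              calc k * z₀.im ≤ |k * z₀.im| := le_abs_self _
                _ = |k| * |z₀.im| := abs_mul _ _
          _ ≤ C * Real.exp (-δ * |k|) := by
              rw [mul_assoc, ← Real.exp_add]
              apply mul_le_mul_of_nonneg_left ?_ hC.le
              apply Real.exp_le_exp.mpr
              have : |z₀.im| < γ := hz₀
              nlinarith [abs_nonneg k]
    · -- measurability of F' at z₀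
      exact hInt.aestronglyMeasurable.mul
        ((Complex.continuous_exp.comp (((continuous_const.mul Complex.continuous_ofReal).mul continuous_const).neg)).mul ((continuous_const.mul Complex.continuous_ofReal).neg)).aestronglyMeasurable
    · -- uniform bound on the derivative on the ball
      filter_upwards with k z hz
      have him : |z.im| ≤ |z₀.im| + δ := by
        have h1 : |z.im - z₀.im| ≤ ‖z - z₀‖ := by
          simpa using Complex.abs_im_le_norm (z - z₀)
        have h2 : ‖z - z₀‖ < δ := by
          simpa [dist_eq_norm] using Metric.mem_ball.mp hz
        calc |z.im| ≤ |z₀.im| + |z.im - z₀.im| := by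
              have := abs_add_le z₀.im (z.im - z₀.im); simpa using this
          _ ≤ |z₀.im| + δ := by linarith
      rw [norm_mul, norm_mul, hexp_norm, norm_neg, norm_mul, Complex.norm_I,
        one_mul, Complex.norm_real, Real.norm_eq_abs]
      have hkz : Real.exp (k * z.im) ≤ Real.exp (|k| * (|z₀.im| + δ)) := by
        apply Real.exp_le_exp.mpr
        calc k * z.im ≤ |k * z.im| := le_abs_self _
          _ = |k| * |z.im| := abs_mul _ _
          _ ≤ |k| * (|z₀.im| + δ) := mul_le_mul_of_nonneg_left him (abs_nonneg k)
      have habsk : |k| ≤ (2/δ) * Real.exp ((δ/2) * |k|) := by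
        have h := Real.add_one_le_exp ((δ/2) * |k|)
        have h' : (δ/2) * |k| ≤ Real.exp ((δ/2) * |k|) := by linarith
        calc |k| = (2/δ) * ((δ/2) * |k|) := by field_simp
          _ ≤ (2/δ) * Real.exp ((δ/2) * |k|) :=
            mul_le_mul_of_nonneg_left h' (by positivity)
      have hγim : |z₀.im| < γ := hz₀
      calc ‖g k‖ * (Real.exp (k * z.im) * |k|)
          ≤ (C * Real.exp (-γ * |k|)) *
            (Real.exp (|k| * (|z₀.im| + δ)) * ((2/δ) * Real.exp ((δ/2) * |k|))) := by
            apply mul_le_mul (hg_bound k) ?_ (by positivity) (by positivity)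
            exact mul_le_mul hkz habsk (abs_nonneg k) (Real.exp_nonneg _)
        _ = C * (2/δ) * (Real.exp (-γ * |k|) * Real.exp (|k| * (|z₀.im| + δ))
            * Real.exp ((δ/2) * |k|)) := by ring
        _ ≤ C * (2/δ) * Real.exp (-(δ/2) * |k|) := by
            apply mul_le_mul_of_nonneg_left ?_ (by positivity)
            rw [← Real.exp_add, ← Real.exp_add]
            apply Real.exp_le_exp.mpr
            nlinarith [abs_nonneg k]
    · exact ((integrable_exp_neg_mul_abs' (by positivity : (0:ℝ) < δ/2)).const_mul
        (C * (2/δ)))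
    · -- the pointwise derivative
      filter_upwards with k z hz
      have h1 : HasDerivAt (fun z : ℂ => -(Complex.I * k * z)) (-(Complex.I * k)) z := by
        simpa using ((hasDerivAt_id z).const_mul (-(Complex.I * (k:ℂ))))
      exact (h1.cexp).const_mul (g k)
  -- F is analytic on the strip
  have hFdo : DifferentiableOn ℂ F S := fun z hz => (hF_deriv z hz).differentiableWithinAt
  have hF_an : AnalyticOnNhd ℂ F S := hFdo.analyticOnNhd hS_open
  have hEdo : DifferentiableOn ℂ (fun z : ℂ => Complex.exp (-z)) S := by
    intro z _
    exact ((Complex.differentiable_exp (-z)).comp z (differentiable_neg z)).differentiableWithinAt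
  have hE_an : AnalyticOnNhd ℂ (fun z : ℂ => Complex.exp (-z)) S := hEdo.analyticOnNhd hS_open
  -- the strip is preconnected
  have hconv : Convex ℝ S := by
    have hSeq : S = Complex.imLm ⁻¹' (Set.Ioo (-γ) γ) := by
      ext z
      simp [hS_def, abs_lt, and_comm]
    rw [hSeq]
    exact (convex_Ioo _ _).linear_preimage _
  have hpre : IsPreconnected S := hconv.isPreconnected
  have h0S : (0:ℂ) ∈ S := by simp [hS_def, hγ]
  -- F agrees with exp(-z) frequently near 0
  have hfreq : ∃ᶠ z in nhdsWithin (0:ℂ) {(0:ℂ)}ᶜ, F z = Complex.exp (-z) := by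
    have hseq : Filter.Tendsto (fun n : ℕ => ((1/(n+1:ℝ) : ℝ) : ℂ)) Filter.atTop
        (nhdsWithin (0:ℂ) {(0:ℂ)}ᶜ) := by
      apply tendsto_nhdsWithin_of_tendsto_nhds_of_eventually_within
      · have h0 : Filter.Tendsto (fun n : ℕ => (1/(n+1:ℝ) : ℝ)) Filter.atTop (nhds 0) :=
          tendsto_one_div_add_atTop_nhds_zero_nat
        have h0' := (Complex.continuous_ofReal.tendsto 0).comp h0
        rw [Complex.ofReal_zero] at h0'
        exact h0'
      · filter_upwards with n
        simp only [Set.mem_compl_iff, Set.mem_singleton_iff]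
        intro h
        have : (1/(n+1:ℝ) : ℝ) = 0 := by exact_mod_cast h
        have hpos : (0:ℝ) < 1/(n+1:ℝ) := by positivity
        linarith
    apply hseq.frequently
    apply Filter.Frequently.of_forall
    intro n
    have hx : (0:ℝ) ≤ 1/(n+1:ℝ) := by positivity
    simpa [hF_def, hg_def] using hFor (1/(n+1:ℝ)) hx
  have hEq : Set.EqOn F (fun z : ℂ => Complex.exp (-z)) S :=
    hF_an.eqOn_of_preconnected_of_frequently_eq hE_an hpre h0S hfreq
  -- F is bounded on the real line
  set M : ℝ := ∫ k : ℝ, ‖g k‖ with hM_def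
  have hM : 0 ≤ M := integral_nonneg fun k => norm_nonneg _
  have hFb : ∀ x : ℝ, ‖F (x:ℂ)‖ ≤ M := by
    intro x
    calc ‖F (x:ℂ)‖ ≤ ∫ k : ℝ, ‖g k * Complex.exp (-(Complex.I * k * (x:ℂ)))‖ :=
          norm_integral_le_integral_norm _
      _ = M := by
          rw [hM_def]
          congr 1
          funext k
          rw [norm_mul, hexp_norm]
          simp
  -- contradiction at a very negative real point
  set R : ℝ := Real.log (M+1) + 1 with hR_def
  have h1 : F ((-R : ℝ) : ℂ) = Complex.exp (-((-R : ℝ) : ℂ)) := hEq (by simp [hS_def, hγ])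
  have h2 : ‖Complex.exp (-((-R : ℝ) : ℂ))‖ = Real.exp R := by
    rw [Complex.norm_exp]
    simp
  have h3 : Real.exp R ≤ M := by
    rw [← h2, ← h1]; exact hFb _
  have h4 : Real.exp R = (M+1) * Real.exp 1 := by
    rw [hR_def, Real.exp_add, Real.exp_log (by linarith)]
  nlinarith [Real.add_one_le_exp (1:ℝ)]
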